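/- The identity map from X with the CW-topology to X_crs (the same set with the coarser topology τ) is continuous, and its restriction to the complement of the origin x is a homeomorphism onto its image. -/

import Mathlib

open Set Topology Filter

noncomputable section

/-- The closed unit disk. -/
def D : Type := {z : ℂ // ‖z‖ ≤ 1}

instance : TopologicalSpace D := instTopologicalSpaceSubtype

/-- The wedge point on each disk. -/
def basept : D := ⟨1, by norm_num⟩

/-- The outer point (outer 0-cell) on each disk. -/
def outerpt : D := ⟨-1, by norm_num⟩

/-- Wedge relation: glue all copies of the base point together. -/
def wsetoid : Setoid (ℕ × D) where
  r p q := p = q ∨ (p.2 = basept ∧ q.2 = basept)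
  iseqv := by
    constructor
    · intro p; exact Or.inl rfl
    · rintro p q (rfl | ⟨h1, h2⟩)
      · exact Or.inl rfl
      · exact Or.inr ⟨h2, h1⟩
    · rintro p q r (rfl | ⟨h1, h2⟩) (rfl | ⟨h3, h4⟩)
      · exact Or.inl rfl
      · exact Or.inr ⟨h3, h4⟩
      · exact Or.inr ⟨h1, h2⟩
      · exact Or.inr ⟨h1, h4⟩

/-- The wedge of countably many closed 2-disks, with the weak (CW) topology. -/
def X : Type := Quotient wsetoid

instance : TopologicalSpace X := instTopologicalSpaceQuotient

/-- The point of the `n`-th disk with disk-coordinate `z`. -/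
def pt (n : ℕ) (z : D) : X := Quotient.mk wsetoid (n, z)

/-- The origin (the wedge point `x`). -/
def origin : X := pt 0 basept

/-- The outer 0-cell `e_n^0` of the `n`-th disk. -/
def outer (n : ℕ) : X := pt n outerpt

/-- The `n`-th closed 2-cell `C_n`. -/
def cell (n : ℕ) : Set X := Set.range (pt n)

/-- The open sets of the coarser topology `τ`: CW-open sets which either do not
contain the origin, or contain all but finitely many punctured cells `C_n \ {e_n^0}`. -/
def crsOpen (U : Set X) : Prop :=
  IsOpen U ∧ (origin ∉ U ∨ {n : ℕ | ¬ (cell n \ {outer n} ⊆ U)}.Finite)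

/-- The coarser topology `τ` on the wedge of disks. -/
def crsTop : TopologicalSpace X where
  IsOpen := crsOpen
  isOpen_univ := ⟨isOpen_univ, Or.inr (Set.Finite.subset Set.finite_empty
    (fun _ hn => absurd (Set.subset_univ _) hn))⟩
  isOpen_inter := by
    rintro U V ⟨hU, hU2⟩ ⟨hV, hV2⟩
    refine ⟨hU.inter hV, ?_⟩
    by_cases hx : origin ∈ U ∩ V
    · have h1 := hU2.resolve_left (fun h => h hx.1)
      have h2 := hV2.resolve_left (fun h => h hx.2)
      refine Or.inr ((h1.union h2).subset ?_)
      intro n hn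
      by_contra hc
      simp only [Set.mem_union, Set.mem_setOf_eq, not_or, not_not] at hc
      exact hn (Set.subset_inter hc.1 hc.2)
    · exact Or.inl hx
  isOpen_sUnion := by
    intro S hS
    refine ⟨isOpen_sUnion fun U hU => (hS U hU).1, ?_⟩
    by_cases hx : origin ∈ ⋃₀ S
    · obtain ⟨U, hUS, hxU⟩ := hx
      have h1 := (hS U hUS).2.resolve_left (fun h => h hxU)
      refine Or.inr (h1.subset ?_)
      intro n hn hsub
      exact hn (hsub.trans (Set.subset_sUnion_of_mem hUS))
    · exact Or.inl hx


lemma origin_closed : IsClosed ({origin} : Set X) := by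
  haveI : T1Space D := show T1Space {z : ℂ // ‖z‖ ≤ 1} from inferInstance
  letI : Setoid (ℕ × D) := wsetoid
  rw [← isOpen_compl_iff]
  show IsOpen[instTopologicalSpaceQuotient] _
  refine (isOpen_coinduced (f := (Quotient.mk' : ℕ × D → X)) (s := ({origin}ᶜ : Set X))).mpr ?_
  have : (Quotient.mk' : ℕ × D → X) ⁻¹' ({origin}ᶜ) = (Prod.snd ⁻¹' ({basept}ᶜ) : Set (ℕ × D)) := by
    ext p
    simp only [Set.mem_preimage, Set.mem_compl_iff, Set.mem_singleton_iff]
    constructor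
    · intro h hb
      exact h (Quotient.sound (Or.inr ⟨hb, rfl⟩))
    · intro h he
      rcases Quotient.exact he with h' | ⟨h2, _⟩
      · exact h (congrArg Prod.snd h')
      · exact h h2
  refine (congrArg (IsOpen (X := ℕ × D)) this).mpr ?_
  exact (isClosed_singleton.preimage continuous_snd).isOpen_compl

/-- the identity map from the CW-topology to the coarser topology is
continuous, and restricts to a homeomorphism onto its image away from the origin,
i.e. the two topologies induce the same subspace topology on the complement of the origin. -/
theorem id_continuous_homeo_off_origin :
    Continuous[instTopologicalSpaceQuotient, crsTop] (id : X → X) ∧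
      crsTop.induced (Subtype.val : {y : X // y ≠ origin} → X) =
        (instTopologicalSpaceSubtype : TopologicalSpace {y : X // y ≠ origin}) := by
  constructor
  · exact continuous_def.mpr fun U hU => hU.1
  · apply le_antisymm
    · -- hard direction: CW-open traces are τ-open traces
      intro V hV
      obtain ⟨U, hU, rfl⟩ : ∃ U : Set X, IsOpen[(inferInstance : TopologicalSpace X)] U ∧ Subtype.val ⁻¹' U = V :=
        isOpen_induced_iff.mp hV
      refine (isOpen_induced_iff (t := crsTop)).mpr
        ⟨U \ {origin}, ⟨hU.sdiff origin_closed, Or.inl fun h => h.2 rfl⟩, ?_⟩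
      ext ⟨y, hy⟩
      simp [hy]
    · -- easy direction: the CW topology is finer, so is its trace
      have h : (inferInstance : TopologicalSpace X) ≤ crsTop := fun U hU => hU.1
      exact induced_mono h

end
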